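/- For every d ≥ 1 there exists a constant a ≥ 1 such that for every c ≥ 1 there exists N such that for all m ≥ N and all r ≥ 2: PH^{d+1}_f(2_d(a·c·m), r·(d+2)^2·2^{(c+2)·a}) ≥ PH^{d+1}_{id}(m,r), where f(i) = max{j : 2_d(j·c) ≤ i} (and f(i) = 0 if no such j exists) and id is the identity function. -/

import Mathlib

set_option maxHeartbeats 1600000

/-- Tower function: `tower 0 i = i`, `tower (n+1) i = 2 ^ tower n i`. -/
def tower : ℕ → ℕ → ℕ
  | 0, i => i
  | n+1, i => 2 ^ tower n i

/-- `PHProp f d m r R` : every colouring of the `d`-element subsets of `{m,…,R}` with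
`r` colours admits a homogeneous `H ⊆ {m,…,R}` with `|H| ≥ f(min H)`. -/
def PHProp (f : ℕ → ℕ) (d m r R : ℕ) : Prop :=
  ∀ C : Finset ℕ → ℕ,
    (∀ s ⊆ Finset.Icc m R, s.card = d → C s < r) →
    ∃ H : Finset ℕ, H ⊆ Finset.Icc m R ∧ H.Nonempty ∧ f (sInf (H : Set ℕ)) ≤ H.card ∧
      ∀ s ⊆ H, ∀ t ⊆ H, s.card = d → t.card = d → C s = C t

/-- `PHnum f d m r` : the least `R` witnessing the Paris–Harrington theorem `PH_f^d(m,r)`. -/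
noncomputable def PHnum (f : ℕ → ℕ) (d m r : ℕ) : ℕ := sInf {R | PHProp f d m r R}

lemma tower_mono (d : ℕ) : Monotone (tower d) := by
  induction d with
  | zero => exact fun a b h => h
  | succ n ih => exact fun a b h => Nat.pow_le_pow_right (by norm_num) (ih h)

lemma tower_strictMono (d : ℕ) : StrictMono (tower d) := by
  induction d with
  | zero => exact fun a b h => h
  | succ n ih => exact fun a b h => Nat.pow_lt_pow_right (by norm_num) (ih h)

lemma le_tower (d i : ℕ) : i ≤ tower d i := by
  induction d with
  | zero => exact le_rfl
  | succ n ih => exact le_trans ih (Nat.le_of_lt (Nat.lt_two_pow_self))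

/-- extract a finset of any size from an infinite set -/
lemma Set.Infinite.exists_finset_card (X : Set ℕ) (hX : X.Infinite) (n : ℕ) :
    ∃ t : Finset ℕ, ↑t ⊆ X ∧ t.card = n := by
  obtain ⟨t, hts, htfin, htcard⟩ := hX.exists_subset_ncard_eq n
  refine ⟨htfin.toFinset, by simpa using hts, ?_⟩
  rw [Set.ncard_eq_toFinset_card _ htfin] at htcard
  exact htcard

lemma pigeon_nat (r : ℕ) (f : ℕ → ℕ) (hf : ∀ n, f n < r) : ∃ v, {n | f n = v}.Infinite := by
  by_contra h
  push_neg at h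
  have : (Set.univ : Set ℕ) ⊆ ⋃ v ∈ Finset.range r, {n | f n = v} := by
    intro n _
    simp only [Set.mem_iUnion]
    exact ⟨f n, by simpa using hf n, rfl⟩
  exact Set.infinite_univ ((Set.Finite.biUnion (Finset.range r).finite_toSet
    (fun v _ => h v)).subset this)

/-- Infinite hypergraph Ramsey theorem. -/
theorem infRamsey (k : ℕ) : ∀ (r : ℕ) (C : Finset ℕ → ℕ) (X : Set ℕ), X.Infinite →
    (∀ s : Finset ℕ, ↑s ⊆ X → s.card = k → C s < r) → 0 < r →
    ∃ Y ⊆ X, Y.Infinite ∧ ∃ v, v < r ∧ ∀ s : Finset ℕ, ↑s ⊆ Y → s.card = k → C s = v := by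
  induction k with
  | zero =>
    intro r C X hX hC hr
    refine ⟨X, subset_rfl, hX, C ∅, hC ∅ (by simp) (by simp), fun s hs h0 => ?_⟩
    rw [Finset.card_eq_zero] at h0; rw [h0]
  | succ k ih =>
    intro r C X hX hC hr
    -- one-step refinement
    have step : ∀ Z : Set ℕ, Z ⊆ X → Z.Infinite →
        ∃ p : Set ℕ × ℕ, p.1 ⊆ Z ∧ p.1.Infinite ∧ (∀ x ∈ p.1, sInf Z < x) ∧ p.2 < r ∧
          ∀ s : Finset ℕ, ↑s ⊆ p.1 → s.card = k → C (insert (sInf Z) s) = p.2 := by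
      intro Z hZX hZ
      set a := sInf Z with ha
      have haZ : a ∈ Z := Nat.sInf_mem hZ.nonempty
      have hZ1 : (Z ∩ Set.Ioi a).Infinite := by
        have : Z ∩ Set.Ioi a = Z \ Set.Iic a := by
          ext x; simp [Set.mem_diff, not_le]
        rw [this]
        exact hZ.diff (Set.finite_Iic a)
      have hbound : ∀ s : Finset ℕ, ↑s ⊆ Z ∩ Set.Ioi a → s.card = k →
          (fun s => C (insert a s)) s < r := by
        intro s hs hcard
        have has : a ∉ s := fun h => lt_irrefl a (hs h).2
        refine hC _ ?_ (by rw [Finset.card_insert_of_notMem has, hcard])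
        intro x hx
        rcases Finset.mem_insert.1 (by exact_mod_cast hx) with h | h
        · exact hZX (h ▸ haZ)
        · exact hZX (hs h).1
      obtain ⟨Y1, hY1sub, hY1inf, v, hvr, hv⟩ :=
        ih r (fun s => C (insert a s)) (Z ∩ Set.Ioi a) hZ1 hbound hr
      refine ⟨(Y1, v), fun x hx => (hY1sub hx).1, hY1inf,
        fun x hx => (hY1sub hx).2, hvr, fun s hs hcard => hv s hs hcard⟩
    -- iterate
    obtain ⟨W, hW⟩ : ∃ W : (Z : Set ℕ) → Z ⊆ X → Z.Infinite → Set ℕ × ℕ,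
        ∀ Z h1 h2, (W Z h1 h2).1 ⊆ Z ∧ (W Z h1 h2).1.Infinite ∧
          (∀ x ∈ (W Z h1 h2).1, sInf Z < x) ∧ (W Z h1 h2).2 < r ∧
          ∀ s : Finset ℕ, ↑s ⊆ (W Z h1 h2).1 → s.card = k →
            C (insert (sInf Z) s) = (W Z h1 h2).2 :=
      ⟨fun Z h1 h2 => (step Z h1 h2).choose, fun Z h1 h2 => (step Z h1 h2).choose_spec⟩
    let F : {Z : Set ℕ // Z ⊆ X ∧ Z.Infinite} → {Z : Set ℕ // Z ⊆ X ∧ Z.Infinite} :=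
      fun Z => ⟨(W Z.1 Z.2.1 Z.2.2).1,
        le_trans (hW Z.1 Z.2.1 Z.2.2).1 Z.2.1, (hW Z.1 Z.2.1 Z.2.2).2.1⟩
    let Zs : ℕ → {Z : Set ℕ // Z ⊆ X ∧ Z.Infinite} := fun n => F^[n] ⟨X, subset_rfl, hX⟩
    have hZsucc : ∀ n, Zs (n+1) = F (Zs n) := fun n => Function.iterate_succ_apply' F n _
    let a : ℕ → ℕ := fun n => sInf (Zs n).1
    let vs : ℕ → ℕ := fun n => (W (Zs n).1 (Zs n).2.1 (Zs n).2.2).2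
    have hstep : ∀ n, (Zs (n+1)).1 = (W (Zs n).1 (Zs n).2.1 (Zs n).2.2).1 := by
      intro n; rw [hZsucc n]
    have hsub : ∀ n, (Zs (n+1)).1 ⊆ (Zs n).1 := by
      intro n; rw [hstep n]; exact (hW _ _ _).1
    have hchain : ∀ i j, i ≤ j → (Zs j).1 ⊆ (Zs i).1 := by
      intro i j hij
      induction j with
      | zero => cases Nat.le_zero.1 hij; exact subset_rfl
      | succ j ihj =>
        rcases Nat.lt_or_ge i (j+1) with h | h
        · exact le_trans (hsub j) (ihj (Nat.lt_succ_iff.1 h))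
        · have : i = j + 1 := le_antisymm hij h
          subst this; exact subset_rfl
    have hgt : ∀ n, ∀ x ∈ (Zs (n+1)).1, a n < x := by
      intro n; rw [hstep n]; exact (hW _ _ _).2.2.1
    have hamem : ∀ n, a n ∈ (Zs n).1 := fun n => Nat.sInf_mem (Zs n).2.2.nonempty
    have hamono : StrictMono a := by
      apply strictMono_nat_of_lt_succ
      intro n
      exact hgt n _ (hamem (n+1))
    have hhomog : ∀ n, ∀ s : Finset ℕ, ↑s ⊆ (Zs (n+1)).1 → s.card = k →
        C (insert (a n) s) = vs n := by
      intro n; rw [hstep n]; exact (hW _ _ _).2.2.2.2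
    have hvr : ∀ n, vs n < r := fun n => (hW _ _ _).2.2.2.1
    obtain ⟨v, hvinf⟩ := pigeon_nat r vs hvr
    have hvv : v < r := by
      obtain ⟨n, hn⟩ := hvinf.nonempty
      exact hn ▸ hvr n
    refine ⟨a '' {n | vs n = v}, ?_, hvinf.image (Set.injOn_of_injective hamono.injective),
      v, hvv, ?_⟩
    · rintro x ⟨n, _, rfl⟩
      exact (Zs n).2.1 (hamem n)
    · intro s hs hcard
      have hne : s.Nonempty := Finset.card_pos.1 (by omega)
      set x₀ := s.min' hne with hx₀
      obtain ⟨n₀, hn₀I, hn₀⟩ := hs (by exact_mod_cast s.min'_mem hne)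
      have hs' : ↑(s.erase x₀) ⊆ (Zs (n₀+1)).1 := by
        intro x hx
        have hxs : x ∈ s := Finset.mem_of_mem_erase (by exact_mod_cast hx)
        have hxne : x ≠ x₀ := Finset.ne_of_mem_erase (by exact_mod_cast hx)
        obtain ⟨j, _, hj⟩ := hs (by exact_mod_cast hxs)
        have : x₀ < x := lt_of_le_of_ne (s.min'_le x hxs) (Ne.symm hxne)
        have hj' : n₀ < j := by
          apply hamono.lt_iff_lt.1
          rw [hj, hn₀]; exact this
        exact hchain (n₀+1) j hj' (hj ▸ hamem j)
      have hcard' : (s.erase x₀).card = k := by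
        rw [Finset.card_erase_of_mem (s.min'_mem hne), hcard]; omega
      calc C s = C (insert (a n₀) (s.erase x₀)) := by
              rw [hn₀, Finset.insert_erase (s.min'_mem hne)]
        _ = vs n₀ := hhomog n₀ _ hs' hcard'
        _ = v := hn₀I

lemma ultra_fix (U : Ultrafilter ℕ) (r : ℕ) (g : ℕ → ℕ) (E : Set ℕ) (hE : E ∈ U)
    (hg : ∀ R ∈ E, g R < r) : ∃ v, v < r ∧ {R | g R = v} ∈ U := by
  by_contra hcon
  push_neg at hcon
  have hcompl : ∀ v, v < r → {R | g R = v}ᶜ ∈ U := fun v hv =>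
    Ultrafilter.compl_mem_iff_notMem.2 (hcon v hv)
  have hint : (E ∩ ⋂ v ∈ Finset.range r, {R | g R = v}ᶜ) ∈ (U : Filter ℕ) := by
    refine Filter.inter_mem hE ?_
    refine (Filter.biInter_mem (Finset.range r).finite_toSet).2 ?_
    intro v hv
    exact hcompl v (by simpa using hv)
  obtain ⟨R, hR⟩ := (U : Filter ℕ).nonempty_of_mem hint
  have h1 : g R < r := hg R hR.1
  have h2 := hR.2
  simp only [Set.mem_iInter, Set.mem_compl_iff, Set.mem_setOf_eq] at h2
  exact h2 (g R) (by simpa using h1) rfl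

lemma Ici_mem_hyper (K : ℕ) : Set.Ici K ∈ Filter.hyperfilter ℕ := by
  apply Filter.hyperfilter_le_cofinite
  rw [Filter.mem_cofinite]
  simpa using Set.finite_Iio K

theorem PH_exists (f : ℕ → ℕ) (d m r : ℕ) (hd : 0 < d) (hr : 0 < r) :
    ∃ R, PHProp f d m r R := by
  by_contra h
  push_neg at h
  have hbad : ∀ R, ∃ C : Finset ℕ → ℕ,
      (∀ s ⊆ Finset.Icc m R, s.card = d → C s < r) ∧
      ∀ H : Finset ℕ, H ⊆ Finset.Icc m R → H.Nonempty → f (sInf (H : Set ℕ)) ≤ H.card →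
        ∃ s, s ⊆ H ∧ ∃ t, t ⊆ H ∧ s.card = d ∧ t.card = d ∧ C s ≠ C t := by
    intro R
    have hR := h R
    unfold PHProp at hR
    push_neg at hR
    exact hR
  choose Cf hCf1 hCf2 using hbad
  set U := Filter.hyperfilter ℕ with hU
  have hlim : ∀ s : Finset ℕ, ↑s ⊆ Set.Ici m → s.card = d →
      ∃ v, v < r ∧ {R | Cf R s = v} ∈ U := by
    intro s hs hcard
    have hne : s.Nonempty := Finset.card_pos.1 (hcard ▸ hd)
    refine ultra_fix U r (fun R => Cf R s) (Set.Ici (s.max' hne)) (Ici_mem_hyper _) ?_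
    intro R hR
    refine hCf1 R s ?_ hcard
    intro x hx
    exact Finset.mem_Icc.2 ⟨hs hx, le_trans (s.le_max' x hx) hR⟩
  classical
  set C : Finset ℕ → ℕ := fun s =>
    if hs : ↑s ⊆ Set.Ici m ∧ s.card = d then (hlim s hs.1 hs.2).choose else 0 with hCdef
  have hCbound : ∀ s : Finset ℕ, ↑s ⊆ Set.Ici m → s.card = d → C s < r := by
    intro s h1 h2
    rw [hCdef]; simp only []
    rw [dif_pos ⟨h1, h2⟩]
    exact (hlim s h1 h2).choose_spec.1
  have hCU : ∀ s : Finset ℕ, ↑s ⊆ Set.Ici m → s.card = d → {R | Cf R s = C s} ∈ U := by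
    intro s h1 h2
    rw [hCdef]; simp only []
    rw [dif_pos ⟨h1, h2⟩]
    exact (hlim s h1 h2).choose_spec.2
  obtain ⟨Y, hYsub, hYinf, v, hvr, hhom⟩ :=
    infRamsey d r C (Set.Ici m) (Set.Ici_infinite m) hCbound hr
  set x₁ := sInf Y with hx₁
  have hx₁Y : x₁ ∈ Y := Nat.sInf_mem hYinf.nonempty
  have hY' : (Y ∩ Set.Ioi x₁).Infinite := by
    have : Y ∩ Set.Ioi x₁ = Y \ Set.Iic x₁ := by
      ext x; simp [Set.mem_diff, not_le]
    rw [this]; exact hYinf.diff (Set.finite_Iic x₁)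
  obtain ⟨t, htsub, htcard⟩ := Set.Infinite.exists_finset_card _ hY' (f x₁)
  set H : Finset ℕ := insert x₁ t with hH
  have hx₁t : x₁ ∉ t := fun hmem => lt_irrefl x₁ (htsub (by exact_mod_cast hmem)).2
  have hHY : ↑H ⊆ Y := by
    intro x hx
    rcases Finset.mem_insert.1 (by exact_mod_cast hx) with h1 | h1
    · exact h1 ▸ hx₁Y
    · exact (htsub (by exact_mod_cast h1)).1
  have hHne : H.Nonempty := ⟨x₁, Finset.mem_insert_self _ _⟩
  have hHcard : H.card = f x₁ + 1 := by
    rw [hH, Finset.card_insert_of_notMem hx₁t, htcard]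
  have hsInfH : sInf (H : Set ℕ) = x₁ := by
    apply le_antisymm
    · exact Nat.sInf_le (by exact_mod_cast Finset.mem_insert_self x₁ t)
    · refine le_csInf (by exact ⟨x₁, by exact_mod_cast Finset.mem_insert_self x₁ t⟩) ?_
      intro b hb
      rcases Finset.mem_insert.1 (by exact_mod_cast hb) with h1 | h1
      · omega
      · exact le_of_lt (htsub (by exact_mod_cast h1)).2
  -- agreement set
  have hA : (Set.Ici (H.max' hHne) ∩
      ⋂ s ∈ H.powerset, {R | s.card = d → Cf R s = C s}) ∈ (U : Filter ℕ) := by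
    refine Filter.inter_mem (Ici_mem_hyper _) ?_
    refine (Filter.biInter_mem (H.powerset : Finset (Finset ℕ)).finite_toSet).2 ?_
    intro s hs
    rcases eq_or_ne s.card d with hcd | hcd
    · have hsY : ↑s ⊆ Set.Ici m := fun x hx =>
        hYsub (hHY (Finset.mem_powerset.1 (by simpa using hs) hx))
      have := hCU s hsY hcd
      refine Filter.mem_of_superset this ?_
      intro R hR
      exact fun _ => hR
    · have : {R | s.card = d → Cf R s = C s} = Set.univ := by
        ext R; simp [hcd]
      rw [this]; exact Filter.univ_mem
  obtain ⟨R, hRA⟩ := (U : Filter ℕ).nonempty_of_mem hA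
  have hHIcc : H ⊆ Finset.Icc m R := by
    intro x hx
    refine Finset.mem_Icc.2 ⟨hYsub (hHY (by exact_mod_cast hx)), ?_⟩
    exact le_trans (H.le_max' x hx) hRA.1
  obtain ⟨s, hsH, t', ht'H, hscard, ht'card, hne⟩ :=
    hCf2 R H hHIcc hHne (by rw [hsInfH, hHcard]; omega)
  have hagree : ∀ u : Finset ℕ, u ⊆ H → u.card = d → Cf R u = C u := by
    intro u hu hucard
    have h2 := hRA.2
    simp only [Set.mem_iInter, Set.mem_setOf_eq] at h2
    exact h2 u (by simpa using Finset.mem_powerset.2 hu) hucard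
  have hCsY : ∀ u : Finset ℕ, u ⊆ H → u.card = d → C u = v := by
    intro u hu hucard
    exact hhom u (fun x hx => hHY (hu hx)) hucard
  apply hne
  rw [hagree s hsH hscard, hagree t' ht'H ht'card, hCsY s hsH hscard, hCsY t' ht'H ht'card]

/-- Existence (by counting) of a pair colouring of `[0, 2^D)` with `2^β` colours whose
homogeneous sets have size `< 4*(D/β) + 9`. -/
lemma base_pair (β D : ℕ) (hβ : 0 < β) :
    ∃ F : Finset ℕ → ℕ, (∀ t, F t < 2^β) ∧
      ∀ S : Finset ℕ, S ⊆ Finset.range (2^D) →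
        (∀ p ⊆ S, ∀ p' ⊆ S, p.card = 2 → p'.card = 2 → F p = F p') →
        S.card < 4*(D/β) + 9 := by
  classical
  set q := 2^β with hq
  have hq2 : 2 ≤ q := by
    rw [hq]; calc 2 = 2^1 := (pow_one 2).symm
    _ ≤ 2^β := Nat.pow_le_pow_right (by norm_num) hβ
  set N := 2^D with hN
  set s₀ := 4*(D/β) + 9 with hs₀
  have hDlt' : D < β * (D/β + 1) := by
    rw [Nat.mul_add, Nat.mul_one]
    have h1 := Nat.div_add_mod D β
    have h2 := Nat.mod_lt D hβ
    omega
  rcases Nat.lt_or_ge N s₀ with hNs | hsN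
  · -- trivial case: the ground set is smaller than the bound
    refine ⟨fun _ => 0, fun t => by positivity, fun S hS _ => ?_⟩
    calc S.card ≤ (Finset.range N).card := Finset.card_le_card hS
      _ = N := Finset.card_range N
      _ < s₀ := hNs
  set V := Finset.range N with hV
  set P : Finset (Finset ℕ) := V.powersetCard 2 with hP
  have hPcard : P.card = N.choose 2 := by
    rw [hP, Finset.card_powersetCard, Finset.card_range]
  -- the space of colourings
  have hΩcard : Fintype.card ({p // p ∈ P} → Fin q) = q ^ P.card := by
    rw [Fintype.card_fun, Fintype.card_fin, Fintype.card_coe]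
  set Bad : Finset ℕ → ({p // p ∈ P} → Fin q) → Prop :=
    fun S ω => ∃ v : Fin q, ∀ p : {p // p ∈ P}, (↑p : Finset ℕ) ⊆ S → ω p = v with hBad
  -- counting the bad colourings for a fixed S
  have hbadcard : ∀ S ∈ V.powersetCard s₀,
      (Finset.univ.filter (Bad S)).card ≤ q ^ (P.card - s₀.choose 2 + 1) := by
    intro S hS
    have hScard : S.card = s₀ := (Finset.mem_powersetCard.1 hS).2
    have hSV : S ⊆ V := (Finset.mem_powersetCard.1 hS).1
    set G : (Fin q × ({p : {p // p ∈ P} // ¬ (↑p : Finset ℕ) ⊆ S} → Fin q)) → ({p // p ∈ P} → Fin q) :=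
      fun vh p => if hp : (↑p : Finset ℕ) ⊆ S then vh.1 else vh.2 ⟨p, hp⟩ with hG
    have hsub : Finset.univ.filter (Bad S) ⊆ Finset.univ.image G := by
      intro ω hω
      obtain ⟨v, hv⟩ := (Finset.mem_filter.1 hω).2
      refine Finset.mem_image.2 ⟨(v, fun pp => ω pp.1), Finset.mem_univ _, ?_⟩
      funext p
      rw [hG]
      by_cases hp : (↑p : Finset ℕ) ⊆ S
      · simp only [dif_pos hp]; exact (hv p hp).symm
      · simp only [dif_neg hp]
    have hc2 : Fintype.card {p : {p // p ∈ P} // ¬ (↑p : Finset ℕ) ⊆ S}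
        ≤ P.card - s₀.choose 2 := by
      have h1 : Fintype.card {p : {p // p ∈ P} // ¬ (↑p : Finset ℕ) ⊆ S}
          = Fintype.card {p // p ∈ P} - Fintype.card {p : {p // p ∈ P} // (↑p : Finset ℕ) ⊆ S} :=
        Fintype.card_subtype_compl _
      have h2 : s₀.choose 2 ≤ Fintype.card {p : {p // p ∈ P} // (↑p : Finset ℕ) ⊆ S} := by
        have hinj : Function.Injective
            (fun p : {p // p ∈ S.powersetCard 2} =>
              (⟨⟨↑p, Finset.powersetCard_mono hSV p.2⟩,
                (Finset.mem_powersetCard.1 p.2).1⟩ :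
                {p : {p // p ∈ P} // (↑p : Finset ℕ) ⊆ S})) := by
          intro p1 p2 h
          apply Subtype.ext
          exact congrArg (fun x => (x.1 : Finset ℕ)) h
        calc s₀.choose 2 = (S.powersetCard 2).card := by
              rw [Finset.card_powersetCard, hScard]
          _ = Fintype.card {p // p ∈ S.powersetCard 2} := (Fintype.card_coe _).symm
          _ ≤ _ := Fintype.card_le_of_injective _ hinj
      rw [h1, Fintype.card_coe]
      omega
    calc (Finset.univ.filter (Bad S)).card ≤ (Finset.univ.image G).card :=
          Finset.card_le_card hsub
      _ ≤ (Finset.univ : Finset (Fin q × ({p : {p // p ∈ P} // ¬ (↑p : Finset ℕ) ⊆ S} → Fin q))).card :=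
          Finset.card_image_le
      _ = q * q ^ (Fintype.card {p : {p // p ∈ P} // ¬ (↑p : Finset ℕ) ⊆ S}) := by
          rw [Finset.card_univ, Fintype.card_prod, Fintype.card_fun, Fintype.card_fin]
      _ ≤ q * q ^ (P.card - s₀.choose 2) :=
          Nat.mul_le_mul_left q (Nat.pow_le_pow_right (by omega) hc2)
      _ = q ^ (P.card - s₀.choose 2 + 1) := by ring
  -- the key arithmetic inequality
  have harith : N.choose s₀ * q < q ^ (s₀.choose 2) := by
    set t := D/β with ht
    have hDlt : D < β*(t+1) := hDlt'
    have hchoose2 : s₀.choose 2 = (4*t+9)*(2*t+4) := by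
      rw [Nat.choose_two_right, hs₀]
      have h8 : 4*t + 9 - 1 = 4*t + 8 := by omega
      have h9 : (4*t+9) * (4*t+9 - 1) = 2*((4*t+9)*(2*t+4)) := by rw [h8]; ring
      rw [h9, Nat.mul_div_cancel_left _ (by norm_num : (0:ℕ) < 2)]
    have hexp : D * s₀ + β < β * (s₀.choose 2) := by
      rw [hchoose2, hs₀]
      have hstep1 : D*(4*t+9) < β*(t+1)*(4*t+9) :=
        (Nat.mul_lt_mul_right (show 0 < 4*t+9 by omega)).2 hDlt
      have hstep2 : β*(t+1)*(4*t+9) + β ≤ β*((4*t+9)*(2*t+4)) := by nlinarith [Nat.zero_le t]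
      calc D*(4*t+9) + β < β*(t+1)*(4*t+9) + β := Nat.add_lt_add_right hstep1 β
        _ ≤ β*((4*t+9)*(2*t+4)) := hstep2
    calc N.choose s₀ * q ≤ N^s₀ * q := Nat.mul_le_mul_right q (Nat.choose_le_pow _ _)
      _ = 2^(D*s₀) * 2^β := by rw [hN, ← pow_mul, hq]
      _ = 2^(D*s₀ + β) := by rw [← pow_add]
      _ < 2^(β * s₀.choose 2) := Nat.pow_lt_pow_right (by norm_num) hexp
      _ = q ^ (s₀.choose 2) := by rw [hq, ← pow_mul]
  -- total bad count is less than all colourings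
  have hchle : s₀.choose 2 ≤ P.card := by
    rw [hPcard]; exact Nat.choose_le_choose 2 hsN
  set bigbad : Finset ({p // p ∈ P} → Fin q) :=
    (V.powersetCard s₀).biUnion (fun S => Finset.univ.filter (Bad S)) with hbigbad
  have hbigcard : bigbad.card < Fintype.card ({p // p ∈ P} → Fin q) := by
    calc bigbad.card ≤ ∑ S ∈ V.powersetCard s₀, (Finset.univ.filter (Bad S)).card :=
          Finset.card_biUnion_le
      _ ≤ (V.powersetCard s₀).card * q ^ (P.card - s₀.choose 2 + 1) := by
          rw [← smul_eq_mul]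
          exact Finset.sum_le_card_nsmul _ _ _ hbadcard
      _ = N.choose s₀ * q ^ (P.card - s₀.choose 2 + 1) := by
          rw [Finset.card_powersetCard, Finset.card_range]
      _ = (N.choose s₀ * q) * q ^ (P.card - s₀.choose 2) := by ring
      _ < q ^ (s₀.choose 2) * q ^ (P.card - s₀.choose 2) :=
          (Nat.mul_lt_mul_right (Nat.pow_pos (by omega))).2 harith
      _ = q ^ (s₀.choose 2 + (P.card - s₀.choose 2)) := by rw [← pow_add]
      _ = q ^ P.card := by rw [Nat.add_sub_cancel' hchle]
      _ = Fintype.card ({p // p ∈ P} → Fin q) := hΩcard.symm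
  have hgood : ∃ ω : {p // p ∈ P} → Fin q, ∀ S ∈ V.powersetCard s₀, ¬ Bad S ω := by
    by_contra hcon
    push_neg at hcon
    have : (Finset.univ : Finset ({p // p ∈ P} → Fin q)) ⊆ bigbad := by
      intro ω _
      obtain ⟨S, hS1, hS2⟩ := hcon ω
      exact Finset.mem_biUnion.2 ⟨S, hS1, Finset.mem_filter.2 ⟨Finset.mem_univ _, hS2⟩⟩
    have := Finset.card_le_card this
    rw [Finset.card_univ] at this
    omega
  obtain ⟨ω, hω⟩ := hgood
  -- convert to a colouring of all finsets
  refine ⟨fun p => if hp : p ∈ P then (ω ⟨p, hp⟩ : ℕ) else 0, ?_, ?_⟩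
  · intro p
    by_cases hp : p ∈ P
    · simp only [dif_pos hp]; exact (ω ⟨p, hp⟩).2
    · simp only [dif_neg hp]; omega
  · intro S hSV hhom
    by_contra hge
    push_neg at hge
    obtain ⟨S', hS'sub, hS'card⟩ := Finset.exists_subset_card_eq hge
    have hS'mem : S' ∈ V.powersetCard s₀ :=
      Finset.mem_powersetCard.2 ⟨le_trans hS'sub hSV, hS'card⟩
    obtain ⟨p₀, hp₀sub, hp₀card⟩ := Finset.exists_subset_card_eq
      (show 2 ≤ S'.card by rw [hS'card, hs₀]; omega)
    have hp₀P : p₀ ∈ P := Finset.mem_powersetCard.2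
      ⟨le_trans hp₀sub (le_trans hS'sub hSV), hp₀card⟩
    apply hω S' hS'mem
    refine ⟨ω ⟨p₀, hp₀P⟩, ?_⟩
    intro p hp
    have hpcard : (↑p : Finset ℕ).card = 2 := (Finset.mem_powersetCard.1 p.2).2
    have heq := hhom ↑p (le_trans hp hS'sub) p₀ (le_trans hp₀sub hS'sub) hpcard hp₀card
    simp only [dif_pos p.2, dif_pos hp₀P] at heq
    exact Fin.ext heq

/-- position of the most significant differing binary digit -/
noncomputable def del (x y : ℕ) : ℕ := sSup {p | x / 2^p ≠ y / 2^p}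

lemma del_bdd (x y : ℕ) : BddAbove {p | x / 2^p ≠ y / 2^p} := by
  refine ⟨x + y, ?_⟩
  intro p hp
  by_contra hcon
  push_neg at hcon
  have hx : x < 2^p := lt_of_le_of_lt (Nat.le_add_right x y)
    (lt_of_lt_of_le (Nat.lt_two_pow_self) (Nat.pow_le_pow_right (by norm_num) (le_of_lt hcon)))
  have hy : y < 2^p := lt_of_le_of_lt (Nat.le_add_left y x)
    (lt_of_lt_of_le (Nat.lt_two_pow_self) (Nat.pow_le_pow_right (by norm_num) (le_of_lt hcon)))
  exact hp (by rw [Nat.div_eq_of_lt hx, Nat.div_eq_of_lt hy])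

lemma del_mem (x y : ℕ) (h : x ≠ y) : x / 2^(del x y) ≠ y / 2^(del x y) :=
  Nat.sSup_mem ⟨0, by simpa using h⟩ (del_bdd x y)

lemma del_above (x y q : ℕ) (h : del x y < q) : x / 2^q = y / 2^q := by
  by_contra hcon
  exact absurd (le_csSup (del_bdd x y) hcon) (not_le.2 h)

lemma agree_mono (x y a b : ℕ) (h : x / 2^a = y / 2^a) (hab : a ≤ b) :
    x / 2^b = y / 2^b := by
  have : 2^b = 2^a * 2^(b - a) := by rw [← pow_add, Nat.add_sub_cancel' hab]
  rw [this, ← Nat.div_div_eq_div_mul, ← Nat.div_div_eq_div_mul, h]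

lemma del_eq_of (x y p : ℕ) (h1 : x / 2^(p+1) = y / 2^(p+1)) (h2 : x / 2^p ≠ y / 2^p) :
    del x y = p := by
  apply le_antisymm
  · refine csSup_le ⟨p, h2⟩ ?_
    intro q hq
    by_contra hcon
    push_neg at hcon
    exact hq (agree_mono x y (p+1) q h1 hcon)
  · exact le_csSup (del_bdd x y) h2

lemma del_lt (x y M : ℕ) (hxy : x < y) (hy : y < 2^M) : del x y < M := by
  have hmem := del_mem x y (Nat.ne_of_lt hxy)
  by_contra hcon
  push_neg at hcon
  have hx2 : x < 2^(del x y) := lt_of_lt_of_le (lt_trans hxy hy)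
    (Nat.pow_le_pow_right (by norm_num) hcon)
  have hy2 : y < 2^(del x y) := lt_of_lt_of_le hy (Nat.pow_le_pow_right (by norm_num) hcon)
  exact hmem (by rw [Nat.div_eq_of_lt hx2, Nat.div_eq_of_lt hy2])

lemma del_div_lt (x y : ℕ) (h : x < y) :
    x / 2^(del x y) < y / 2^(del x y) :=
  lt_of_le_of_ne (Nat.div_le_div_right (le_of_lt h)) (del_mem x y (Nat.ne_of_lt h))

lemma del_succ_agree (x y : ℕ) : x / 2^(del x y + 1) = y / 2^(del x y + 1) :=
  del_above x y _ (Nat.lt_succ_self _)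

lemma del_ne (x y z : ℕ) (h1 : x < y) (h2 : y < z) : del x y ≠ del y z := by
  intro heq
  set p := del x y with hp
  have e1 : x / 2^p / 2 = y / 2^p / 2 := by
    rw [Nat.div_div_eq_div_mul, Nat.div_div_eq_div_mul, ← pow_succ]
    exact del_succ_agree x y
  have e2 : y / 2^p / 2 = z / 2^p / 2 := by
    rw [Nat.div_div_eq_div_mul, Nat.div_div_eq_div_mul, ← pow_succ]
    have := del_succ_agree y z
    rw [← heq] at this
    exact this
  have l1 : x / 2^p < y / 2^p := del_div_lt x y h1
  have l2 : y / 2^p < z / 2^p := by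
    have := del_div_lt y z h2
    rw [← heq] at this
    exact this
  have m1 := Nat.div_add_mod (x / 2^p) 2
  have m2 := Nat.div_add_mod (y / 2^p) 2
  have m3 := Nat.div_add_mod (z / 2^p) 2
  have r1 : x / 2^p % 2 < 2 := Nat.mod_lt _ (by norm_num)
  have r3 : z / 2^p % 2 < 2 := Nat.mod_lt _ (by norm_num)
  omega

lemma del_max (x y z : ℕ) (h1 : x < y) (h2 : y < z) :
    del x z = max (del x y) (del y z) := by
  rcases lt_or_gt_of_ne (del_ne x y z h1 h2) with h | h
  · -- del x y < del y z : del x z = del y z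
    rw [max_eq_right (le_of_lt h)]
    apply del_eq_of
    · have e1 : x / 2^(del y z + 1) = y / 2^(del y z + 1) :=
        agree_mono x y _ _ (del_succ_agree x y) (by omega)
      rw [e1]; exact del_succ_agree y z
    · have e1 : x / 2^(del y z) = y / 2^(del y z) :=
        agree_mono x y _ _ (del_succ_agree x y) (by omega)
      rw [e1]; exact del_mem y z (Nat.ne_of_lt h2)
  · -- del y z < del x y : del x z = del x y
    rw [max_eq_left (le_of_lt h)]
    apply del_eq_of
    · have e1 : y / 2^(del x y + 1) = z / 2^(del x y + 1) :=
        agree_mono y z _ _ (del_succ_agree y z) (by omega)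
      rw [← e1]; exact del_succ_agree x y
    · have e1 : y / 2^(del x y) = z / 2^(del x y) :=
        agree_mono y z _ _ (del_succ_agree y z) (by omega)
      rw [← e1]; exact del_mem x y (Nat.ne_of_lt h1)

/-- max of consecutive `del`s over an interval -/
lemma interval_max (u : ℕ → ℕ) (n : ℕ) (hu : ∀ i j, i < j → j < n → u i < u j) :
    ∀ b a, a < b → b < n → ∃ i, a ≤ i ∧ i < b ∧ del (u a) (u b) = del (u i) (u (i+1)) ∧
      ∀ j, a ≤ j → j < b → del (u j) (u (j+1)) ≤ del (u i) (u (i+1)) := by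
  intro b
  induction b with
  | zero => omega
  | succ b ihb =>
    intro a hab hbn
    rcases eq_or_lt_of_le (Nat.lt_succ_iff.1 hab) with heq | hlt
    · subst heq
      refine ⟨a, le_rfl, Nat.lt_succ_self a, rfl, ?_⟩
      intro j h1 h2
      have : j = a := by omega
      subst this
      exact le_rfl
    · obtain ⟨i, hi1, hi2, hi3, hi4⟩ := ihb a hlt (by omega)
      have hmax : del (u a) (u (b+1)) = max (del (u a) (u b)) (del (u b) (u (b+1))) :=
        del_max _ _ _ (hu a b hlt (by omega)) (hu b (b+1) (by omega) hbn)
      rcases le_total (del (u b) (u (b+1))) (del (u i) (u (i+1))) with h | h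
      · refine ⟨i, hi1, by omega, ?_, ?_⟩
        · rw [hmax, hi3, max_eq_left (hi3 ▸ h)]
        · intro j h1 h2
          rcases Nat.lt_or_ge j b with hj | hj
          · exact hi4 j h1 hj
          · have : j = b := by omega
            subst this; exact h
      · refine ⟨b, by omega, by omega, ?_, ?_⟩
        · rw [hmax, max_eq_right (hi3 ▸ h)]
        · intro j h1 h2
          rcases Nat.lt_or_ge j b with hj | hj
          · exact le_trans (hi4 j h1 hj) (hi3 ▸ h)
          · have : j = b := by omega
            subst this; exact le_rfl

lemma mono_of_succ (h : ℕ → ℕ) (s : ℕ) (hh : ∀ i, i < s → h i < h (i+1)) :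
    ∀ j i, i < j → j ≤ s → h i < h j := by
  intro j
  induction j with
  | zero => omega
  | succ j ihj =>
    intro i hij hjs
    rcases eq_or_lt_of_le (Nat.lt_succ_iff.1 hij) with heq | hlt
    · subst heq; exact hh i (by omega)
    · exact lt_trans (ihj i hlt (by omega)) (hh j (by omega))

lemma anti_of_succ (h : ℕ → ℕ) (s : ℕ) (hh : ∀ i, i < s → h (i+1) < h i) :
    ∀ j i, i < j → j ≤ s → h j < h i := by
  intro j
  induction j with
  | zero => omega
  | succ j ihj =>
    intro i hij hjs
    rcases eq_or_lt_of_le (Nat.lt_succ_iff.1 hij) with heq | hlt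
    · subst heq; exact hh i (by omega)
    · exact lt_trans (hh j (by omega)) (ihj i hlt (by omega))

/-- the increasing enumeration of a finset, as a total function -/
noncomputable def enum (t : Finset ℕ) : ℕ → ℕ := fun i =>
  if h : i < t.card then t.orderEmbOfFin rfl ⟨i, h⟩ else 0

lemma enum_mem (t : Finset ℕ) (i : ℕ) (h : i < t.card) : enum t i ∈ t := by
  rw [enum, dif_pos h]
  exact Finset.orderEmbOfFin_mem t rfl _

lemma enum_lt (t : Finset ℕ) (i j : ℕ) (hij : i < j) (hj : j < t.card) :
    enum t i < enum t j := by
  rw [enum, enum, dif_pos hj, dif_pos (lt_trans hij hj)]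
  exact (t.orderEmbOfFin rfl).strictMono (by exact_mod_cast hij)

lemma enum_unique (X : Finset ℕ) (k1 : ℕ) (hc : X.card = k1) (f : ℕ → ℕ)
    (hmem : ∀ a, a < k1 → f a ∈ X) (hmono : ∀ a b, a < b → b < k1 → f a < f b) :
    ∀ a, a < k1 → enum X a = f a := by
  intro a ha
  have key : (fun i : Fin k1 => f i.val) = ⇑(X.orderEmbOfFin hc) := by
    apply Finset.orderEmbOfFin_unique hc (fun i => hmem i.val i.2)
    intro i j hij
    exact hmono i.val j.val (by exact_mod_cast hij) j.2
  have ha' : a < X.card := hc ▸ ha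
  rw [enum, dif_pos ha']
  have h2 : f a = X.orderEmbOfFin hc ⟨a, ha⟩ := congrFun key ⟨a, ha⟩
  rw [h2]
  exact Finset.orderEmbOfFin_eq_orderEmbOfFin_iff.2 rfl

lemma enum_image_range (J : Finset ℕ) : (Finset.range J.card).image (enum J) = J := by
  apply Finset.eq_of_subset_of_card_le
  · intro x hx
    obtain ⟨a, ha, rfl⟩ := Finset.mem_image.1 hx
    exact enum_mem J a (Finset.mem_range.1 ha)
  · apply le_of_eq
    symm
    rw [Finset.card_image_of_injOn, Finset.card_range]
    intro a ha b hb hab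
    rcases lt_trichotomy a b with h | h | h
    · exact absurd hab (Nat.ne_of_lt (enum_lt J a b h (Finset.mem_range.1 hb)))
    · exact h
    · exact absurd hab.symm (Nat.ne_of_lt (enum_lt J b a h (Finset.mem_range.1 ha)))

/-- the set of `del`s of consecutive elements -/
noncomputable def Dset (t : Finset ℕ) : Finset ℕ :=
  (Finset.range (t.card - 1)).image (fun a => del (enum t a) (enum t (a+1)))

/-- comparison bit of the first two consecutive `del`s -/
noncomputable def bitc (t : Finset ℕ) : ℕ :=
  if 3 ≤ t.card then (if del (enum t 0) (enum t 1) < del (enum t 1) (enum t 2) then 1 else 0)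
  else 0

lemma bitc_lt (t : Finset ℕ) : bitc t < 2 := by
  unfold bitc; split_ifs <;> omega

/-- The Erdős–Hajnal stepping-up lemma. -/
lemma step_up (k M q s : ℕ) (hk : 2 ≤ k) (hs : 2 ≤ s) (hq : 0 < q) (F : Finset ℕ → ℕ)
    (hFq : ∀ t, F t < q)
    (hF : ∀ S ⊆ Finset.range M,
      (∀ t ⊆ S, ∀ t' ⊆ S, t.card = k → t'.card = k → F t = F t') → S.card < s) :
    ∃ F' : Finset ℕ → ℕ, (∀ t, F' t < 2*q) ∧
      ∀ S ⊆ Finset.range (2^M),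
        (∀ t ⊆ S, ∀ t' ⊆ S, t.card = k+1 → t'.card = k+1 → F' t = F' t') →
        S.card < s + k := by
  classical
  refine ⟨fun t => 2 * F (Dset t) + bitc t, ?_, ?_⟩
  · intro t
    show 2 * F (Dset t) + bitc t < 2*q
    have h1 := hFq (Dset t)
    have h2 := bitc_lt t
    omega
  intro S0 hS0sub hhom0
  by_contra hge
  push_neg at hge
  obtain ⟨T, hTsub, hTcard⟩ := Finset.exists_subset_card_eq hge
  set n := s + k with hn
  have hTr : T ⊆ Finset.range (2^M) := fun x hx => hS0sub (hTsub hx)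
  have hhom : ∀ t ⊆ T, ∀ t' ⊆ T, t.card = k+1 → t'.card = k+1 →
      2 * F (Dset t) + bitc t = 2 * F (Dset t') + bitc t' := fun t ht t' ht' h1 h2 =>
    hhom0 t (fun x hx => hTsub (ht hx)) t' (fun x hx => hTsub (ht' hx)) h1 h2
  set u := enum T with hu
  have hmono : ∀ i j, i < j → j < n → u i < u j := fun i j hij hj =>
    enum_lt T i j hij (by rw [hTcard]; exact hj)
  have humem : ∀ i, i < n → u i ∈ T := fun i hi => enum_mem T i (by rw [hTcard]; exact hi)
  have hubound : ∀ i, i < n → u i < 2^M := fun i hi => Finset.mem_range.1 (hTr (humem i hi))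
  have hddM : ∀ i, i + 1 < n → del (u i) (u (i+1)) < M := fun i hi =>
    del_lt _ _ _ (hmono i (i+1) (by omega) hi) (hubound (i+1) hi)
  -- generic subset builder
  have build : ∀ g : ℕ → ℕ, (∀ a b, a < b → b ≤ k → g a < g b) → (∀ a, a ≤ k → g a < n) →
      ∃ X : Finset ℕ, X ⊆ T ∧ X.card = k+1 ∧ (∀ a, a ≤ k → enum X a = u (g a)) := by
    intro g hg hgn
    have hinj : ∀ a b, a < b → b < k+1 → u (g a) < u (g b) := by
      intro a b hab hb
      exact hmono _ _ (hg a b hab (by omega)) (hgn b (by omega))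
    set X := (Finset.range (k+1)).image (fun a => u (g a)) with hX
    have hcard : X.card = k+1 := by
      rw [hX, Finset.card_image_of_injOn, Finset.card_range]
      intro a ha b hb hab
      simp only [Finset.coe_range, Set.mem_Iio] at ha hb
      rcases lt_trichotomy a b with h|h|h
      · exact absurd hab (Nat.ne_of_lt (hinj a b h hb))
      · exact h
      · exact absurd hab.symm (Nat.ne_of_lt (hinj b a h ha))
    refine ⟨X, ?_, hcard, ?_⟩
    · intro x hx
      obtain ⟨a, ha, rfl⟩ := Finset.mem_image.1 hx
      exact humem _ (hgn a (Nat.lt_succ_iff.1 (Finset.mem_range.1 ha)))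
    · intro a ha
      refine enum_unique X (k+1) hcard (fun a => u (g a)) ?_ ?_ a (by omega)
      · intro a' ha'
        rw [hX]
        exact Finset.mem_image.2 ⟨a', Finset.mem_range.2 ha', rfl⟩
      · intro a' b' hab' hb'
        exact hinj a' b' hab' hb'
  -- the comparison subsets
  have hXi : ∀ i, i < s → ∃ X : Finset ℕ, X ⊆ T ∧ X.card = k+1 ∧
      bitc X = (if del (u i) (u (i+1)) < del (u (i+1)) (u (i+2)) then 1 else 0) := by
    intro i hi
    set g : ℕ → ℕ := fun a => if a ≤ 2 then i + a else n - (k+1) + a with hg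
    have hgm : ∀ a b, a < b → b ≤ k → g a < g b := by
      intro a b hab hb
      simp only [hg]
      split_ifs with h1 h2 h2 <;> omega
    have hgn : ∀ a, a ≤ k → g a < n := by
      intro a ha
      simp only [hg]
      split_ifs with h1 <;> omega
    obtain ⟨X, hX1, hX2, hX3⟩ := build g hgm hgn
    refine ⟨X, hX1, hX2, ?_⟩
    have e0 : g 0 = i := by simp [hg]
    have e1 : g 1 = i + 1 := by simp [hg]
    have e2 : g 2 = i + 2 := by simp [hg]
    rw [bitc, if_pos (by omega : 3 ≤ X.card), hX3 0 (by omega), hX3 1 (by omega),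
      hX3 2 (by omega), e0, e1, e2]
  -- the comparison bit is constant
  have hcomp : ∀ i, i < s → ∀ i', i' < s →
      ((del (u i) (u (i+1)) < del (u (i+1)) (u (i+2))) ↔
        (del (u i') (u (i'+1)) < del (u (i'+1)) (u (i'+2)))) := by
    intro i hi i' hi'
    obtain ⟨X, hX1, hX2, hX3⟩ := hXi i hi
    obtain ⟨X', hX1', hX2', hX3'⟩ := hXi i' hi'
    have heq := hhom X hX1 X' hX1' hX2 hX2'
    have b1 := bitc_lt X
    have b2 := bitc_lt X'
    have hb : bitc X = bitc X' := by omega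
    rw [hX3, hX3'] at hb
    constructor
    · intro h
      by_contra hcon
      rw [if_pos h, if_neg hcon] at hb
      omega
    · intro h
      by_contra hcon
      rw [if_neg hcon, if_pos h] at hb
      omega
  -- the common finish
  have finish : (∀ a b, a < s+1 → b < s+1 → a ≠ b →
        del (u a) (u (a+1)) ≠ del (u b) (u (b+1))) →
      (∀ J : Finset ℕ, J ⊆ Finset.range (s+1) → J.card = k →
        ∃ X, X ⊆ T ∧ X.card = k+1 ∧
          Dset X = J.image (fun i => del (u i) (u (i+1)))) → False := by
    intro hinj hreal
    set dd : ℕ → ℕ := fun i => del (u i) (u (i+1)) with hdd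
    have hinjOn : Set.InjOn dd ↑(Finset.range (s+1)) := by
      intro a ha b hb hab
      by_contra hcon
      exact hinj a b (by simpa using ha) (by simpa using hb) hcon hab
    set V := (Finset.range (s+1)).image dd with hV
    have hVcard : V.card = s+1 := by
      rw [hV, Finset.card_image_of_injOn hinjOn, Finset.card_range]
    have hVsub : V ⊆ Finset.range M := by
      intro x hx
      obtain ⟨i, hi, rfl⟩ := Finset.mem_image.1 hx
      have hi' := Finset.mem_range.1 hi
      exact Finset.mem_range.2 (hddM i (by omega))
    have hVhom : ∀ t ⊆ V, ∀ t' ⊆ V, t.card = k → t'.card = k → F t = F t' := by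
      intro t ht t' ht' hct hct'
      obtain ⟨J, hJsub, hJim⟩ := Finset.subset_image_iff.1 (hV ▸ ht)
      obtain ⟨J', hJ'sub, hJ'im⟩ := Finset.subset_image_iff.1 (hV ▸ ht')
      have hJcard : J.card = k := by
        rw [← hct, ← hJim]
        exact (Finset.card_image_of_injOn (hinjOn.mono (by exact_mod_cast hJsub))).symm
      have hJ'card : J'.card = k := by
        rw [← hct', ← hJ'im]
        exact (Finset.card_image_of_injOn (hinjOn.mono (by exact_mod_cast hJ'sub))).symm
      obtain ⟨X, hXT, hXc, hXD⟩ := hreal J hJsub hJcard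
      obtain ⟨X', hX'T, hX'c, hX'D⟩ := hreal J' hJ'sub hJ'card
      have heq := hhom X hXT X' hX'T hXc hX'c
      have b1 := bitc_lt X
      have b2 := bitc_lt X'
      have e1 : F (Dset X) = F (Dset X') := by omega
      rw [hXD, hX'D, hJim, hJ'im] at e1
      exact e1
    have := hF V hVsub hVhom
    omega
  -- case analysis on the direction of the first comparison
  rcases em (del (u 0) (u 1) < del (u 1) (u 2)) with hb1 | hb0
  · -- increasing case
    have hinc : ∀ i, i < s → del (u i) (u (i+1)) < del (u (i+1)) (u (i+1+1)) := by
      intro i hi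
      have := (hcomp 0 (by omega) i hi).1 (by simpa using hb1)
      simpa using this
    have hrun := mono_of_succ (fun i => del (u i) (u (i+1))) s hinc
    apply finish
    · intro a b ha hb hab
      rcases lt_or_gt_of_ne hab with h | h
      · exact Nat.ne_of_lt (hrun b a h (by omega))
      · exact (Nat.ne_of_lt (hrun a b h (by omega))).symm
    · intro J hJsub hJcard
      have hjmem : ∀ a, a < k → (enum J) a ≤ s := by
        intro a ha
        have h1 := enum_mem J a (by rw [hJcard]; exact ha)
        have h2 := Finset.mem_range.1 (hJsub h1)
        omega
      have hjmono : ∀ a b, a < b → b < k → (enum J) a < (enum J) b := fun a b hab hb =>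
        enum_lt J a b hab (by rw [hJcard]; exact hb)
      set g : ℕ → ℕ := fun a => if a = 0 then (enum J) 0 else (enum J) (a-1) + 1 with hg
      have hgm : ∀ a b, a < b → b ≤ k → g a < g b := by
        intro a b hab hb
        simp only [hg]
        rw [if_neg (by omega : ¬ b = 0)]
        rcases Nat.eq_zero_or_pos a with ha0 | ha0
        · subst ha0
          rw [if_pos rfl]
          rcases Nat.eq_or_lt_of_le (by omega : 1 ≤ b) with hb1' | hb1'
          · have hbe : b = 1 := hb1'.symm
            subst hbe
            norm_num
          · have := hjmono 0 (b-1) (by omega) (by omega)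
            omega
        · rw [if_neg (by omega : ¬ a = 0)]
          have := hjmono (a-1) (b-1) (by omega) (by omega)
          omega
      have hgn : ∀ a, a ≤ k → g a < n := by
        intro a ha
        simp only [hg]
        split_ifs with h1
        · have := hjmem 0 (by omega)
          omega
        · have := hjmem (a-1) (by omega)
          omega
      obtain ⟨X, hXT, hXc, hXe⟩ := build g hgm hgn
      refine ⟨X, hXT, hXc, ?_⟩
      have hcard1 : X.card - 1 = k := by omega
      rw [Dset, hcard1]
      have hDval : ∀ a, a ∈ Finset.range k →
          del (enum X a) (enum X (a+1)) = (fun i => del (u i) (u (i+1))) ((enum J) a) := by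
        intro a ha
        have ha' := Finset.mem_range.1 ha
        rw [hXe a (by omega), hXe (a+1) (by omega)]
        rcases Nat.eq_zero_or_pos a with ha0 | ha0
        · subst ha0
          have e0 : g 0 = (enum J) 0 := by simp [hg]
          have e1 : g 1 = (enum J) 0 + 1 := by simp [hg]
          rw [e0, e1]
        · have ea : g a = (enum J) (a-1) + 1 := by
            simp only [hg]; rw [if_neg (by omega : ¬ a = 0)]
          have eb : g (a+1) = (enum J) a + 1 := by
            simp only [hg]; rw [if_neg (by omega : ¬ a + 1 = 0)]
            norm_num
          rw [ea, eb]
          have hlt : (enum J) (a-1) < (enum J) a := hjmono (a-1) a (by omega) ha'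
          have hjas : (enum J) a ≤ s := hjmem a ha'
          obtain ⟨i', hi1, hi2, hi3, hi4⟩ := interval_max u n hmono ((enum J) a + 1)
            ((enum J) (a-1) + 1) (by omega) (by omega)
          rw [hi3]
          have hup : del (u i') (u (i'+1)) ≤ del (u ((enum J) a)) (u ((enum J) a + 1)) := by
            rcases Nat.eq_or_lt_of_le (by omega : i' ≤ (enum J) a) with he | hlt2
            · rw [he]
            · exact le_of_lt (hrun ((enum J) a) i' hlt2 (by omega))
          have hdown : del (u ((enum J) a)) (u ((enum J) a + 1)) ≤ del (u i') (u (i'+1)) :=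
            hi4 ((enum J) a) (by omega) (by omega)
          exact le_antisymm hup hdown
      rw [Finset.image_congr hDval]
      have himj : (Finset.range k).image (enum J) = J := by
        have := enum_image_range J
        rw [hJcard] at this
        exact this
      rw [show ((Finset.range k).image fun a => (fun i => del (u i) (u (i+1))) ((enum J) a)) =
        ((Finset.range k).image (enum J)).image (fun i => del (u i) (u (i+1))) by
          rw [Finset.image_image]; rfl]
      rw [himj]
  · -- decreasing case
    have hdec : ∀ i, i < s → del (u (i+1)) (u (i+1+1)) < del (u i) (u (i+1)) := by
      intro i hi
      have hne' : del (u i) (u (i+1)) ≠ del (u (i+1)) (u (i+2)) :=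
        del_ne _ _ _ (hmono i (i+1) (by omega) (by omega))
          (hmono (i+1) (i+2) (by omega) (by omega))
      have hnotlt : ¬ (del (u i) (u (i+1)) < del (u (i+1)) (u (i+2))) := by
        intro hcon
        have := (hcomp i hi 0 (by omega)).1 hcon
        exact hb0 (by simpa using this)
      have : del (u (i+1)) (u (i+2)) < del (u i) (u (i+1)) := by
        rcases lt_trichotomy (del (u i) (u (i+1))) (del (u (i+1)) (u (i+2))) with h|h|h
        · exact absurd h hnotlt
        · exact absurd h hne'
        · exact h
      simpa using this
    have hrun := anti_of_succ (fun i => del (u i) (u (i+1))) s hdec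
    apply finish
    · intro a b ha hb hab
      rcases lt_or_gt_of_ne hab with h | h
      · exact (Nat.ne_of_lt (hrun b a h (by omega))).symm
      · exact Nat.ne_of_lt (hrun a b h (by omega))
    · intro J hJsub hJcard
      have hjmem : ∀ a, a < k → (enum J) a ≤ s := by
        intro a ha
        have h1 := enum_mem J a (by rw [hJcard]; exact ha)
        have h2 := Finset.mem_range.1 (hJsub h1)
        omega
      have hjmono : ∀ a b, a < b → b < k → (enum J) a < (enum J) b := fun a b hab hb =>
        enum_lt J a b hab (by rw [hJcard]; exact hb)
      set g : ℕ → ℕ := fun a => if a < k then (enum J) a else (enum J) (k-1) + 1 with hg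
      have hgm : ∀ a b, a < b → b ≤ k → g a < g b := by
        intro a b hab hb
        simp only [hg]
        rcases Nat.lt_or_ge b k with hbk | hbk
        · rw [if_pos (by omega), if_pos hbk]
          exact hjmono a b hab hbk
        · have hbeq : b = k := by omega
          rw [if_pos (by omega : a < k), if_neg (by omega)]
          rcases Nat.eq_or_lt_of_le (by omega : a ≤ k-1) with he | hlt
          · rw [he]; omega
          · have := hjmono a (k-1) hlt (by omega)
            omega
      have hgn : ∀ a, a ≤ k → g a < n := by
        intro a ha
        simp only [hg]
        split_ifs with h1
        · have := hjmem a h1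
          omega
        · have := hjmem (k-1) (by omega)
          omega
      obtain ⟨X, hXT, hXc, hXe⟩ := build g hgm hgn
      refine ⟨X, hXT, hXc, ?_⟩
      have hcard1 : X.card - 1 = k := by omega
      rw [Dset, hcard1]
      have hDval : ∀ a, a ∈ Finset.range k →
          del (enum X a) (enum X (a+1)) = (fun i => del (u i) (u (i+1))) ((enum J) a) := by
        intro a ha
        have ha' := Finset.mem_range.1 ha
        rw [hXe a (by omega), hXe (a+1) (by omega)]
        have ea : g a = (enum J) a := by simp only [hg]; rw [if_pos ha']
        rcases Nat.lt_or_ge (a+1) k with hak | hak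
        · have eb : g (a+1) = (enum J) (a+1) := by simp only [hg]; rw [if_pos hak]
          rw [ea, eb]
          have hlt : (enum J) a < (enum J) (a+1) := hjmono a (a+1) (by omega) hak
          have hjas : (enum J) (a+1) ≤ s := hjmem (a+1) hak
          obtain ⟨i', hi1, hi2, hi3, hi4⟩ := interval_max u n hmono ((enum J) (a+1))
            ((enum J) a) (by omega) (by omega)
          rw [hi3]
          have hup : del (u i') (u (i'+1)) ≤ del (u ((enum J) a)) (u ((enum J) a + 1)) := by
            rcases Nat.eq_or_lt_of_le hi1 with he | hlt2
            · rw [← he]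
            · exact le_of_lt (hrun i' ((enum J) a) hlt2 (by omega))
          have hdown : del (u ((enum J) a)) (u ((enum J) a + 1)) ≤ del (u i') (u (i'+1)) :=
            hi4 ((enum J) a) (by omega) (by omega)
          exact le_antisymm hup hdown
        · have haeq : a = k - 1 := by omega
          have eb : g (a+1) = (enum J) (k-1) + 1 := by
            simp only [hg]; rw [if_neg (by omega : ¬ a + 1 < k)]
          rw [ea, eb, haeq]
      rw [Finset.image_congr hDval]
      have himj : (Finset.range k).image (enum J) = J := by
        have := enum_image_range J
        rw [hJcard] at this
        exact this
      rw [show ((Finset.range k).image fun a => (fun i => del (u i) (u (i+1))) ((enum J) a)) =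
        ((Finset.range k).image (enum J)).image (fun i => del (u i) (u (i+1))) by
          rw [Finset.image_image]; rfl]
      rw [himj]

/-- colouring of `(d+1)`-subsets of `[0, tower d D)` with small homogeneous sets -/
lemma fiber_colour (d : ℕ) (hd : 1 ≤ d) (β D : ℕ) (hβ : 0 < β) :
    ∃ F : Finset ℕ → ℕ, (∀ t, F t < 2^β * 2^(d-1)) ∧
      ∀ S ⊆ Finset.range (tower d D),
        (∀ t ⊆ S, ∀ t' ⊆ S, t.card = d+1 → t'.card = d+1 → F t = F t') →
        S.card < 4*(D/β) + 9 + d*d := by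
  induction d, hd using Nat.le_induction with
  | base =>
    obtain ⟨F, hFq, hF⟩ := base_pair β D hβ
    refine ⟨F, fun t => by simpa using hFq t, ?_⟩
    intro S hS hhom
    have := hF S (by simpa [tower] using hS) hhom
    omega
  | succ e he ih =>
    obtain ⟨F, hFq, hF⟩ := ih
    obtain ⟨F', hF'q, hF'⟩ := step_up (e+1) (tower e D) (2^β * 2^(e-1))
      (4*(D/β) + 9 + e*e) (by omega) (by omega) (by positivity) F hFq hF
    refine ⟨F', ?_, ?_⟩
    · intro t
      have := hF'q t
      have he2 : 2 * (2^β * 2^(e-1)) = 2^β * 2^(e+1-1) := by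
        have : e + 1 - 1 = (e-1) + 1 := by omega
        rw [this, pow_succ]
        ring
      rw [← he2]
      exact this
    · intro S hS hhom
      have hS' : S ⊆ Finset.range (2^(tower e D)) := by
        have : tower (e+1) D = 2^(tower e D) := rfl
        rw [← this]
        exact hS
      have := hF' S hS' hhom
      have harith : 4*(D/β) + 9 + e*e + (e+1) ≤ 4*(D/β) + 9 + (e+1)*(e+1) := by nlinarith
      omega

/-- the inverse-tower largeness function -/
noncomputable def gf (c d : ℕ) : ℕ → ℕ := fun i => sSup {j | tower d (j * c) ≤ i}

section gf
variable {c d : ℕ} (hc : 1 ≤ c)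

lemma gf_bdd (i : ℕ) (hc : 1 ≤ c) : BddAbove {j | tower d (j * c) ≤ i} := by
  refine ⟨i, ?_⟩
  intro j hj
  have h1 : j ≤ j * c := Nat.le_mul_of_pos_right j (by omega)
  exact le_trans (le_trans h1 (le_tower d (j*c))) hj

lemma gf_ge {i j : ℕ} (hc : 1 ≤ c) (h : tower d (j * c) ≤ i) : j ≤ gf c d i :=
  le_csSup (gf_bdd i hc) h

lemma gf_le_self (i : ℕ) (hc : 1 ≤ c) : gf c d i ≤ i := by
  rcases Set.eq_empty_or_nonempty {j | tower d (j * c) ≤ i} with he | hne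
  · rw [gf, he]
    simp
  · refine csSup_le hne ?_
    intro j hj
    have h1 : j ≤ j * c := Nat.le_mul_of_pos_right j (by omega)
    exact le_trans (le_trans h1 (le_tower d (j*c))) hj

lemma gf_spec {i : ℕ} (hc : 1 ≤ c) (h0 : tower d 0 ≤ i) : tower d (gf c d i * c) ≤ i := by
  have : gf c d i ∈ {j | tower d (j * c) ≤ i} :=
    Nat.sSup_mem ⟨0, by simpa using h0⟩ (gf_bdd i hc)
  exact this

lemma gf_lt_of {i j : ℕ} (hc : 1 ≤ c) (h0 : tower d 0 ≤ i) (h : i < tower d ((j+1) * c)) :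
    gf c d i ≤ j := by
  by_contra hcon
  push_neg at hcon
  have h1 : (j+1) * c ≤ gf c d i * c := Nat.mul_le_mul_right c hcon
  exact absurd (le_trans (tower_mono d h1) (gf_spec hc h0)) (not_le.2 h)

lemma gf_mono (hc : 1 ≤ c) {i i' : ℕ} (h : i ≤ i') : gf c d i ≤ gf c d i' := by
  rcases Set.eq_empty_or_nonempty {j | tower d (j * c) ≤ i} with he | hne
  · rw [gf, he]
    simp
  · exact csSup_le_csSup (gf_bdd i' hc) hne (fun j hj => le_trans hj h)
end gf

lemma encode_inj (B1 B2 : ℕ) (x1 y1 z1 x2 y2 z2 : ℕ) (hx1 : x1 < B1) (hx2 : x2 < B1)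
    (hy1 : y1 < B2) (hy2 : y2 < B2)
    (h : x1 + B1*y1 + (B1*B2)*z1 = x2 + B1*y2 + (B1*B2)*z2) :
    x1 = x2 ∧ y1 = y2 ∧ z1 = z2 := by
  have hB1 : 0 < B1 := by omega
  have hB2 : 0 < B2 := by omega
  have e1 : ∀ x y z : ℕ, x < B1 → (x + B1*y + (B1*B2)*z) % B1 = x := by
    intro x y z hx
    have hr : x + B1*y + (B1*B2)*z = x + B1*(y + B2*z) := by ring
    rw [hr, Nat.add_mul_mod_self_left, Nat.mod_eq_of_lt hx]
  have e2 : ∀ x y z : ℕ, x < B1 → (x + B1*y + (B1*B2)*z) / B1 = y + B2*z := by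
    intro x y z hx
    have hr : x + B1*y + (B1*B2)*z = x + B1*(y + B2*z) := by ring
    rw [hr, Nat.add_mul_div_left _ _ hB1, Nat.div_eq_of_lt hx, Nat.zero_add]
  have hx : x1 = x2 := by rw [← e1 x1 y1 z1 hx1, h, e1 x2 y2 z2 hx2]
  have h2 : y1 + B2*z1 = y2 + B2*z2 := by rw [← e2 x1 y1 z1 hx1, h, e2 x2 y2 z2 hx2]
  have hy : y1 = y2 := by
    have := congrArg (· % B2) h2
    simpa [Nat.add_mul_mod_self_left, Nat.mod_eq_of_lt hy1, Nat.mod_eq_of_lt hy2] using this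
  have hz : z1 = z2 := by
    have := congrArg (· / B2) h2
    simpa [Nat.add_mul_div_left _ _ hB2, Nat.div_eq_of_lt hy1, Nat.div_eq_of_lt hy2] using this
  exact ⟨hx, hy, hz⟩

theorem PH_parametrised_lower_bound (d : ℕ) (hd : 1 ≤ d) :
    ∃ a, 1 ≤ a ∧ ∀ c, 1 ≤ c → ∃ N, ∀ m, N ≤ m → ∀ r, 2 ≤ r →
      PHnum id (d+1) m r ≤
        PHnum (fun i => sSup {j | tower d (j*c) ≤ i}) (d+1)
          (tower d (a*c*m)) (r * (d+2)^2 * 2^((c+2)*a)) := by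
  classical
  refine ⟨2^(d+4), Nat.one_le_two_pow, ?_⟩
  intro c hc
  set a := 2^(d+4) with ha
  have ha32 : 32 ≤ a := by
    rw [ha]
    calc (32:ℕ) = 2^5 := by norm_num
    _ ≤ 2^(d+4) := Nat.pow_le_pow_right (by norm_num) (by omega)
  refine ⟨d*d + c + 42, ?_⟩
  intro m hm r hr
  have hdd_le : d*d + c + 42 ≤ m := hm
  set m' := tower d (a*c*m) with hm'def
  set r' := r * (d+2)^2 * 2^((c+2)*a) with hr'def
  set β := (c+2) * 2^(d+3) with hβdef
  have hβpos : 0 < β := by positivity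
  have h2β : 2^((c+2)*a) = 2^β * 2^β := by
    rw [← pow_add]
    congr 1
    rw [hβdef, ha]
    have : (2:ℕ)^(d+4) = 2^(d+3) * 2 := by rw [pow_succ]
    rw [this]
    ring
  -- fiber colourings
  have hfib := fun v : ℕ => fiber_colour d hd β ((a*v+a)*c) hβpos
  choose Φ hΦq hΦhom using hfib
  -- compression map
  set ψ : ℕ → ℕ := fun x => gf c d x / a with hψdef
  have hapos : 0 < a := by omega
  have hψm : ∀ x, m' ≤ x → m ≤ ψ x := by
    intro x hx
    have h1 : tower d ((a*m)*c) ≤ x := by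
      have : (a*m)*c = a*c*m := by ring
      rw [this]
      exact hx
    have h2 : a*m ≤ gf c d x := gf_ge hc h1
    rw [hψdef]
    rw [Nat.le_div_iff_mul_le hapos]
    calc m * a = a * m := by ring
    _ ≤ gf c d x := h2
  have hψx : ∀ x, ψ x ≤ x := fun x =>
    le_trans (Nat.div_le_self _ _) (gf_le_self x hc)
  have hψmono : ∀ x y, x ≤ y → ψ x ≤ ψ y := fun x y hxy =>
    Nat.div_le_div_right (gf_mono hc hxy)
  -- the RHS set is nonempty
  have hTne : {R | PHProp (gf c d) (d+1) m' r' R}.Nonempty :=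
    PH_exists (gf c d) (d+1) m' r' (by omega) (by positivity)
  set R := sInf {R | PHProp (gf c d) (d+1) m' r' R} with hRdef
  have hRP : PHProp (gf c d) (d+1) m' r' R := Nat.sInf_mem hTne
  show PHnum id (d+1) m r ≤ PHnum (gf c d) (d+1) m' r'
  rw [PHnum, PHnum, ← hRdef]
  -- main claim : PHProp id (d+1) m r R
  apply Nat.sInf_le
  show PHProp id (d+1) m r R
  intro C hC
  set e : Finset ℕ → ℕ := fun s => (s.image ψ).card with he
  set E2 : Finset ℕ → ℕ := fun s => if e s = d+1 then C (s.image ψ) else 0 with hE2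
  set E3 : Finset ℕ → ℕ := fun s =>
    if e s = 1 then Φ (sInf (↑(s.image ψ) : Set ℕ)) s else 0 with hE3
  set C' : Finset ℕ → ℕ := fun s => (e s - 1) + (d+1) * E2 s + ((d+1)*r) * E3 s with hC'def
  -- facts about images of relevant sets
  have himage : ∀ s : Finset ℕ, s ⊆ Finset.Icc m' R → s.image ψ ⊆ Finset.Icc m R := by
    intro s hs x hx
    obtain ⟨y, hy, rfl⟩ := Finset.mem_image.1 hx
    have hy' := Finset.mem_Icc.1 (hs hy)
    exact Finset.mem_Icc.2 ⟨hψm y hy'.1, le_trans (hψx y) hy'.2⟩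
  have hE2lt : ∀ s : Finset ℕ, s ⊆ Finset.Icc m' R → s.card = d+1 → E2 s < r := by
    intro s hs hcard
    rw [hE2]
    simp only []
    split_ifs with hcond
    · exact hC (s.image ψ) (himage s hs) hcond
    · omega
  have hE3lt : ∀ s : Finset ℕ, E3 s < 2^β * 2^(d-1) := by
    intro s
    rw [hE3]
    simp only []
    split_ifs with hcond
    · exact hΦq _ s
    · positivity
  have he1 : ∀ s : Finset ℕ, s.card = d+1 → 1 ≤ e s ∧ e s ≤ d+1 := by
    intro s hcard
    constructor
    · have hne' : s.Nonempty := Finset.card_pos.1 (by omega)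
      exact Finset.card_pos.2 (hne'.image ψ)
    · exact le_trans (Finset.card_image_le) (le_of_eq hcard)
  -- colour bound
  have hC'bound : ∀ s ⊆ Finset.Icc m' R, s.card = d+1 → C' s < r' := by
    intro s hs hcard
    have h1 := he1 s hcard
    have h2 := hE2lt s hs hcard
    have h3 := hE3lt s
    have hstep : C' s < (d+1) * r * (2^β * 2^(d-1)) := by
      rw [hC'def]
      simp only []
      have hr1 : (d+1)*(E2 s + 1) = (d+1)*E2 s + (d+1) := by ring
      have hr2 : ((d+1)*r)*(E3 s + 1) = ((d+1)*r)*E3 s + (d+1)*r := by ring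
      have hm1 : (d+1)*(E2 s + 1) ≤ (d+1)*r := Nat.mul_le_mul_left _ (by omega)
      have hm2 : ((d+1)*r)*(E3 s + 1) ≤ ((d+1)*r)*(2^β * 2^(d-1)) :=
        Nat.mul_le_mul_left _ (by omega)
      have hr3 : (d+1)*r*(2^β * 2^(d-1)) = ((d+1)*r)*(2^β * 2^(d-1)) := by ring
      omega
    refine lt_of_lt_of_le hstep ?_
    rw [hr'def, h2β]
    have hd1 : d + 1 ≤ (d+2)^2 := by nlinarith
    have hd2 : (2:ℕ)^(d-1) ≤ 2^β := by
      apply Nat.pow_le_pow_right (by norm_num)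
      have hdlt : d < 2^(d+3) := lt_of_lt_of_le ((Nat.lt_two_pow_self (n := d)))
        (Nat.pow_le_pow_right (by norm_num) (by omega))
      have : 2^(d+3) ≤ β := by
        rw [hβdef]
        exact Nat.le_mul_of_pos_left _ (by omega)
      omega
    calc (d+1) * r * (2^β * 2^(d-1)) = r * ((d+1) * 2^(d-1)) * 2^β := by ring
    _ ≤ r * ((d+2)^2 * 2^β) * 2^β := by
        apply Nat.mul_le_mul_right
        apply Nat.mul_le_mul_left
        exact Nat.mul_le_mul hd1 hd2
    _ = r * (d+2)^2 * (2^β * 2^β) := by ring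
  -- apply the Paris-Harrington property of R
  obtain ⟨H', hH'Icc, hH'ne, hH'large, hH'hom⟩ := hRP C' hC'bound
  set x₀ := sInf (↑H' : Set ℕ) with hx₀def
  have hx₀H : x₀ ∈ H' := by
    have : x₀ ∈ (↑H' : Set ℕ) := Nat.sInf_mem (Finset.coe_nonempty.2 hH'ne)
    exact_mod_cast this
  have hx₀Icc := Finset.mem_Icc.1 (hH'Icc hx₀H)
  set J := gf c d x₀ with hJdef
  have hJcard : J ≤ H'.card := hH'large
  have hJam : a * m ≤ J := by
    rw [hJdef]
    apply gf_ge hc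
    have : (a*m)*c = a*c*m := by ring
    rw [this]
    exact hx₀Icc.1
  have hmbig : d*d + c + 42 ≤ m := hdd_le
  have hdd_d : d ≤ d*d := Nat.le_mul_of_pos_left d (by omega)
  have ham : m ≤ a * m := Nat.le_mul_of_pos_left m hapos
  have hcardbig : d + 2 ≤ H'.card := by omega
  -- decode homogeneous colours
  have hdecode : ∀ s ⊆ H', ∀ t ⊆ H', s.card = d+1 → t.card = d+1 →
      e s = e t ∧ E2 s = E2 t ∧ E3 s = E3 t := by
    intro s hs t ht hcs hct
    have heq := hH'hom s hs t ht hcs hct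
    rw [hC'def] at heq
    simp only [] at heq
    have h1 := he1 s hcs
    have h2 := he1 t hct
    have h3 := hE2lt s (fun x hx => hH'Icc (hs hx)) hcs
    have h4 := hE2lt t (fun x hx => hH'Icc (ht hx)) hct
    obtain ⟨ha', hb', hc'⟩ := encode_inj (d+1) r (e s - 1) (E2 s) (E3 s)
      (e t - 1) (E2 t) (E3 t) (by omega) (by omega) h3 h4 heq
    exact ⟨by omega, hb', hc'⟩
  -- common value of e
  obtain ⟨s₀, hs₀sub, hs₀card⟩ := Finset.exists_subset_card_eq
    (show d+1 ≤ H'.card by omega)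
  set e₀ := e s₀ with he₀
  have hecommon : ∀ s ⊆ H', s.card = d+1 → e s = e₀ :=
    fun s hs hcs => (hdecode s hs s₀ hs₀sub hcs hs₀card).1
  have he₀range : 1 ≤ e₀ ∧ e₀ ≤ d+1 := he1 s₀ hs₀card
  -- main case analysis
  rcases eq_or_ne e₀ (d+1) with hcase | hcase1
  · -- ψ is injective on H' : transfer directly
    have hinj : ∀ x ∈ H', ∀ y ∈ H', ψ x = ψ y → x = y := by
      intro x hx y hy hxy
      by_contra hne
      have hpair : ({x, y} : Finset ℕ) ⊆ H' := by
        intro z hz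
        rcases Finset.mem_insert.1 hz with h | h
        · exact h ▸ hx
        · exact (Finset.mem_singleton.1 h) ▸ hy
      have hpc : ({x, y} : Finset ℕ).card = 2 := Finset.card_pair hne
      obtain ⟨s, hs1, hs2, hs3⟩ := Finset.exists_subsuperset_card_eq hpair (n := d-1 + ({x, y} : Finset ℕ).card)
        (by omega) (by omega)
      have hscard : s.card = d+1 := by rw [hs3, hpc]; omega
      have hesd : e s = d+1 := hcase ▸ hecommon s hs2 hscard
      have hcollapse : s.image ψ ⊆ (s.erase y).image ψ := by
        intro z hz
        obtain ⟨w, hw, rfl⟩ := Finset.mem_image.1 hz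
        rcases eq_or_ne w y with hwy | hwy
        · refine Finset.mem_image.2 ⟨x, ?_, ?_⟩
          · exact Finset.mem_erase.2 ⟨hne, hs1 (Finset.mem_insert_self x {y})⟩
          · rw [hwy]
            exact hxy
        · exact Finset.mem_image.2 ⟨w, Finset.mem_erase.2 ⟨hwy, hw⟩, rfl⟩
      have hcard2 : e s ≤ d := by
        calc e s ≤ ((s.erase y).image ψ).card := Finset.card_le_card hcollapse
        _ ≤ (s.erase y).card := Finset.card_image_le
        _ = d := by
            rw [Finset.card_erase_of_mem (hs1 (by simp)), hscard]
            omega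
      omega
    set Hh := H'.image ψ with hHh
    have hinjOn : Set.InjOn ψ ↑H' := fun x hx y hy hxy =>
      hinj x (by exact_mod_cast hx) y (by exact_mod_cast hy) hxy
    have hHhcard : Hh.card = H'.card := Finset.card_image_of_injOn hinjOn
    have hHhsub : Hh ⊆ Finset.Icc m R := himage H' hH'Icc
    have hHhne : Hh.Nonempty := hH'ne.image ψ
    have hHhmin : sInf (↑Hh : Set ℕ) = ψ x₀ := by
      apply le_antisymm
      · apply Nat.sInf_le
        exact_mod_cast Finset.mem_image_of_mem ψ hx₀H
      · apply le_csInf (Finset.coe_nonempty.2 hHhne)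
        intro b hb
        obtain ⟨z, hz, rfl⟩ := Finset.mem_image.1 (by exact_mod_cast hb : b ∈ Hh)
        exact hψmono x₀ z (Nat.sInf_le (by exact_mod_cast hz))
    refine ⟨Hh, hHhsub, hHhne, ?_, ?_⟩
    · have h1 : ψ x₀ ≤ J := by
        rw [hψdef]
        simp only []
        rw [hJdef]
        exact Nat.div_le_self _ _
      calc id (sInf (↑Hh : Set ℕ)) = ψ x₀ := by rw [id_eq, hHhmin]
      _ ≤ J := h1
      _ ≤ H'.card := hJcard
      _ = Hh.card := hHhcard.symm
    · intro u hu u' hu' hcu hcu'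
      obtain ⟨s, hssub, hsim⟩ := Finset.subset_image_iff.1 (hHh ▸ hu)
      obtain ⟨t, htsub, htim⟩ := Finset.subset_image_iff.1 (hHh ▸ hu')
      have hscard : s.card = d+1 := by
        rw [← hcu, ← hsim]
        exact (Finset.card_image_of_injOn (hinjOn.mono (by exact_mod_cast hssub))).symm
      have htcard : t.card = d+1 := by
        rw [← hcu', ← htim]
        exact (Finset.card_image_of_injOn (hinjOn.mono (by exact_mod_cast htsub))).symm
      have hes : e s = d+1 := hcase ▸ hecommon s hssub hscard
      have het : e t = d+1 := hcase ▸ hecommon t htsub htcard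
      have hE2eq := (hdecode s hssub t htsub hscard htcard).2.1
      rw [hE2] at hE2eq
      simp only [] at hE2eq
      rw [if_pos hes, if_pos het] at hE2eq
      rw [← hsim, ← htim]
      exact hE2eq
  rcases eq_or_ne e₀ 1 with hcase2 | hcase2
  · -- ψ is constant on H' : contradiction via the fiber colouring
    exfalso
    have hconst : ∀ x ∈ H', ∀ y ∈ H', ψ x = ψ y := by
      intro x hx y hy
      rcases eq_or_ne x y with h | h
      · rw [h]
      · have hpair : ({x, y} : Finset ℕ) ⊆ H' := by
          intro z hz
          rcases Finset.mem_insert.1 hz with h' | h'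
          · exact h' ▸ hx
          · exact (Finset.mem_singleton.1 h') ▸ hy
        have hpc : ({x, y} : Finset ℕ).card = 2 := Finset.card_pair h
        obtain ⟨s, hs1, hs2, hs3⟩ := Finset.exists_subsuperset_card_eq hpair (n := d-1 + ({x, y} : Finset ℕ).card)
          (by omega) (by omega)
        have hscard : s.card = d+1 := by rw [hs3, hpc]; omega
        have hes : e s = 1 := hcase2 ▸ hecommon s hs2 hscard
        rw [he] at hes
        simp only [] at hes
        obtain ⟨v, hv⟩ := Finset.card_eq_one.1 hes
        have hxv : ψ x ∈ s.image ψ :=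
          Finset.mem_image_of_mem ψ (hs1 (Finset.mem_insert_self x {y}))
        have hyv : ψ y ∈ s.image ψ :=
          Finset.mem_image_of_mem ψ (hs1 (by simp))
        rw [hv, Finset.mem_singleton] at hxv hyv
        rw [hxv, hyv]
    set w := ψ x₀ with hwdef
    have hwm : m ≤ w := hψm x₀ hx₀Icc.1
    have hawJ : a * w ≤ J := by
      rw [hwdef, hψdef]
      simp only []
      rw [hJdef]
      calc a * (gf c d x₀ / a) = (gf c d x₀ / a) * a := by ring
      _ ≤ gf c d x₀ := Nat.div_mul_le_self _ _
    have hrange : ∀ x ∈ H', x ∈ Finset.range (tower d ((a*w+a)*c)) := by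
      intro x hx
      rw [Finset.mem_range]
      by_contra hcon
      push_neg at hcon
      have h1 : a*w + a ≤ gf c d x := gf_ge hc hcon
      have h2 : ψ x = w := hconst x hx x₀ hx₀H
      have h3 : w + 1 ≤ gf c d x / a := by
        rw [Nat.le_div_iff_mul_le hapos]
        calc (w+1)*a = a*w + a := by ring
        _ ≤ gf c d x := h1
      rw [hψdef] at h2
      simp only [] at h2
      omega
    have hΦconst : ∀ t ⊆ H', ∀ t' ⊆ H', t.card = d+1 → t'.card = d+1 →
        Φ w t = Φ w t' := by
      intro t ht t' ht' hct hct'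
      have hE3eq := (hdecode t ht t' ht' hct hct').2.2
      have het : e t = 1 := hcase2 ▸ hecommon t ht hct
      have het' : e t' = 1 := hcase2 ▸ hecommon t' ht' hct'
      have him : ∀ u, u ⊆ H' → u.card = d+1 → sInf (↑(u.image ψ) : Set ℕ) = w := by
        intro u hu hcu
        have hne' : u.Nonempty := Finset.card_pos.1 (by omega)
        obtain ⟨z, hz⟩ := hne'
        have himeq : u.image ψ = {w} := by
          apply Finset.eq_singleton_iff_unique_mem.2
          constructor
          · exact Finset.mem_image.2 ⟨z, hz, hconst z (hu hz) x₀ hx₀H⟩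
          · intro y hy
            obtain ⟨z', hz', rfl⟩ := Finset.mem_image.1 hy
            exact hconst z' (hu hz') x₀ hx₀H
        rw [himeq]
        simp
      rw [hE3] at hE3eq
      simp only [] at hE3eq
      rw [if_pos het, if_pos het', him t ht hct, him t' ht' hct'] at hE3eq
      exact hE3eq
    have hsmall := hΦhom w H' (fun x hx => hrange x hx) hΦconst
    have harith : 4 * (((a*w+a)*c)/β) + 9 + d*d ≤ a*w := by
      have h1 : ((a*w+a)*c)/β ≤ 2*(w+1) := by
        have hstep1 : (a*w+a)*c ≤ (a*w+a)*(c+2) := Nat.mul_le_mul_left _ (by omega)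
        have hstep2 : ((a*w+a)*c)/β ≤ ((a*w+a)*(c+2))/β := Nat.div_le_div_right hstep1
        have hstep3 : ((a*w+a)*(c+2))/β = (a*w+a)/2^(d+3) := by
          rw [hβdef]
          rw [show (c+2)*2^(d+3) = 2^(d+3)*(c+2) by ring]
          exact Nat.mul_div_mul_right _ _ (by omega)
        have hstep4 : (a*w+a)/2^(d+3) = 2*(w+1) := by
          rw [ha]
          rw [show (2:ℕ)^(d+4)*w + 2^(d+4) = 2^(d+3)*(2*(w+1)) by rw [pow_succ]; ring]
          exact Nat.mul_div_cancel_left _ (by positivity)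
        omega
      have h32 : 32*w ≤ a*w := Nat.mul_le_mul_right w ha32
      omega
    omega
  · -- intermediate case : impossible
    exfalso
    set W := H'.image ψ with hWdef
    rcases Nat.lt_or_ge W.card (d+1) with hWsmall | hWbig
    · have hmaps : ∀ x ∈ H', ψ x ∈ W := fun x hx => Finset.mem_image_of_mem ψ hx
      have hWd : W.card ≤ d := by omega
      have hlt : W.card * d < H'.card := by
        have h1 : W.card * d ≤ d * d := Nat.mul_le_mul_right d hWd
        omega
      obtain ⟨w, hwW, hwfib⟩ :=
        Finset.exists_lt_card_fiber_of_mul_lt_card_of_maps_to hmaps hlt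
      obtain ⟨s, hssub, hscard⟩ := Finset.exists_subset_card_eq
        (show d+1 ≤ (H'.filter (fun x => ψ x = w)).card by omega)
      have hsH : s ⊆ H' := fun x hx => Finset.mem_of_mem_filter x (hssub hx)
      have hes : e s = e₀ := hecommon s hsH hscard
      have hes1 : e s = 1 := by
        rw [he]
        simp only []
        rw [Finset.card_eq_one]
        refine ⟨w, ?_⟩
        apply Finset.eq_singleton_iff_unique_mem.2
        constructor
        · obtain ⟨z, hz⟩ := Finset.card_pos.1 (show 0 < s.card by omega)
          exact Finset.mem_image.2 ⟨z, hz, (Finset.mem_filter.1 (hssub hz)).2⟩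
        · intro y hy
          obtain ⟨z, hz, rfl⟩ := Finset.mem_image.1 hy
          exact (Finset.mem_filter.1 (hssub hz)).2
      omega
    · obtain ⟨W', hW'sub, hW'card⟩ := Finset.exists_subset_card_eq hWbig
      have hpre : ∀ w ∈ W', ∃ x, x ∈ H' ∧ ψ x = w := by
        intro w hw
        obtain ⟨x, hx, hxw⟩ := Finset.mem_image.1 (hW'sub hw)
        exact ⟨x, hx, hxw⟩
      choose pick hpick1 hpick2 using hpre
      set s := W'.attach.image (fun w => pick w.1 w.2) with hsdef
      have himpsi : s.image ψ = W' := by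
        apply Finset.Subset.antisymm
        · intro y hy
          obtain ⟨x, hx, rfl⟩ := Finset.mem_image.1 hy
          obtain ⟨wp, hwp, rfl⟩ := Finset.mem_image.1 hx
          rw [hpick2 wp.1 wp.2]
          exact wp.2
        · intro w hw
          refine Finset.mem_image.2 ⟨pick w hw, ?_, hpick2 w hw⟩
          exact Finset.mem_image.2 ⟨⟨w, hw⟩, Finset.mem_attach _ _, rfl⟩
      have hsH : s ⊆ H' := by
        intro x hx
        obtain ⟨wp, hwp, rfl⟩ := Finset.mem_image.1 hx
        exact hpick1 wp.1 wp.2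
      have hscard : s.card = d+1 := by
        have h1 : (s.image ψ).card ≤ s.card := Finset.card_image_le
        have h2 : s.card ≤ W'.attach.card := Finset.card_image_le
        rw [himpsi, hW'card] at h1
        rw [Finset.card_attach, hW'card] at h2
        omega
      have hes : e s = e₀ := hecommon s hsH hscard
      have hesd : e s = d+1 := by
        rw [he]
        simp only []
        rw [himpsi, hW'card]
      omega
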